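/- Let G be a Hausdorff abelian group, H a closed subgroup such that H and G/H are both reflexive, protodiscrete, and have no infinite compact subsets. Then for every compact subset K of the dual group G^∧ there exists an open subgroup N of G with K ⊆ N^⊥ = {χ ∈ G^∧ : χ(N) = {1}}. -/

import Mathlib

open Pointwise Function

noncomputable section

/-- The canonical evaluation homomorphism of a topological abelian group into its
Pontryagin bidual, `x ↦ (χ ↦ χ x)`. -/
noncomputable def pontryaginEval (G : Type*) [CommGroup G] [TopologicalSpace G]
    [IsTopologicalGroup G] : G →* PontryaginDual (PontryaginDual G) where
  toFun x :=
    { toFun := fun χ => χ x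
      map_one' := rfl
      map_mul' := fun _ _ => rfl
      continuous_toFun :=
        (continuous_eval_const (F := ContinuousMonoidHom G Circle) x :) }
  map_one' := ContinuousMonoidHom.ext fun χ => map_one χ
  map_mul' x y := ContinuousMonoidHom.ext fun χ => map_mul χ x y

/-- A topological group is protodiscrete (linear) if open subgroups form a
neighborhood base at the identity. -/
def Protodiscrete (G : Type*) [Group G] [TopologicalSpace G] : Prop :=
  ∀ U ∈ nhds (1 : G), ∃ V : Subgroup G, IsOpen (V : Set G) ∧ (V : Set G) ⊆ U

/-- A topological group is precompact (totally bounded) if every neighborhood of the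
identity has finitely many translates covering the group. -/
def Precompact (G : Type*) [Group G] [TopologicalSpace G] : Prop :=
  ∀ U ∈ nhds (1 : G), ∃ F : Finset G, ∀ x : G, ∃ f ∈ F, x ∈ f • U

/-- A topological abelian group is (Pontryagin) reflexive if the canonical evaluation
map into its bidual is a topological isomorphism. -/
def PontryaginReflexive (G : Type*) [CommGroup G] [TopologicalSpace G]
    [IsTopologicalGroup G] : Prop :=
  IsHomeomorph (pontryaginEval G)

/-- A subgroup is dually embedded if every continuous character of it extends to a
continuous character of the ambient group. -/
def DuallyEmbedded {G : Type*} [CommGroup G] [TopologicalSpace G] [IsTopologicalGroup G]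
    (L : Subgroup G) : Prop :=
  ∀ χ : PontryaginDual L, ∃ ψ : PontryaginDual G, ∀ x : L, ψ (x : G) = χ x

/-- The annihilator of a subset `K` of `G` in the dual group. -/
def annihilator {G : Type*} [CommGroup G] [TopologicalSpace G] [IsTopologicalGroup G]
    (K : Set G) : Subgroup (PontryaginDual G) where
  carrier := {χ | ∀ x ∈ K, χ x = 1}
  one_mem' := fun x _ => rfl
  mul_mem' := by
    intro a b ha hb x hx
    show a x * b x = 1
    rw [ha x hx, hb x hx, one_mul]
  inv_mem' := by
    intro a ha x hx
    show (a x)⁻¹ = 1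
    rw [ha x hx, inv_one]

/-- A `P`-space: every countable intersection of open sets is open. -/
def IsPSpace (X : Type*) [TopologicalSpace X] : Prop :=
  ∀ s : ℕ → Set X, (∀ n, IsOpen (s n)) → IsOpen (⋂ n, s n)

/-- A set is `Gδ`-dense if it meets every nonempty `Gδ`-set. -/
def GdeltaDense {X : Type*} [TopologicalSpace X] (s : Set X) : Prop :=
  ∀ t : ℕ → Set X, (∀ n, IsOpen (t n)) → (⋂ n, t n).Nonempty → (s ∩ ⋂ n, t n).Nonempty

/-- The graph of a homomorphism, as a subgroup of the product. -/
def graphSubgroup {H₁ H₂ : Type*} [CommGroup H₁] [CommGroup H₂] (φ : H₁ →* H₂) :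
    Subgroup (H₁ × H₂) where
  carrier := {p | p.2 = φ p.1}
  one_mem' := (map_one φ).symm
  mul_mem' := by
    rintro ⟨a, b⟩ ⟨c, d⟩ hb hd
    simp only [Set.mem_setOf_eq] at *
    simp [hb, hd]
  inv_mem' := by
    rintro ⟨a, b⟩ h
    simp only [Set.mem_setOf_eq] at *
    simp [h]

/-- The Σ-product of `D` copies of the circle group inside `𝕋^D`. -/
def sigmaProd (D : Type*) : Subgroup (D → Circle) where
  carrier := {x | {d | x d ≠ 1}.Countable}
  one_mem' := by simp
  mul_mem' := by
    intro a b ha hb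
    refine Set.Countable.mono ?_ (ha.union hb)
    intro d hd
    simp only [Set.mem_union, Set.mem_setOf_eq]
    by_contra h
    push_neg at h
    exact hd (by show a d * b d = 1; rw [h.1, h.2, one_mul])
  inv_mem' := by
    intro a ha
    refine Set.Countable.mono ?_ ha
    intro d hd
    simp only [Set.mem_setOf_eq] at *
    simpa [inv_eq_one] using hd

/-- The group of continuous `Circle`-valued functions on `Y`, as a subgroup of the
product `Y → Circle`; the subspace topology is the topology of pointwise convergence. -/
def Cp (Y : Type*) [TopologicalSpace Y] : Subgroup (Y → Circle) where
  carrier := {f | Continuous f}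
  one_mem' := continuous_const
  mul_mem' := fun hf hg => hf.mul hg
  inv_mem' := fun hf => hf.inv

/-- The one-point Lindelöfication of a discrete set `D`: the point `none` has the
co-countable sets as neighborhoods, all other points are isolated. -/
def Lind (D : Type*) := Option D

instance (D : Type*) : TopologicalSpace (Lind D) where
  IsOpen U := (none : Option D) ∈ U → {d : D | (some d : Option D) ∉ U}.Countable
  isOpen_univ := by intro _; exact Set.Countable.mono (fun d hd => hd trivial) Set.countable_empty
  isOpen_inter := by
    intro U V hU hV h
    refine Set.Countable.mono ?_ ((hU h.1).union (hV h.2))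
    intro d hd
    simp only [Set.mem_union, Set.mem_setOf_eq] at *
    by_contra hc
    push_neg at hc
    exact hd ⟨hc.1, hc.2⟩
  isOpen_sUnion := by
    intro S hS h
    obtain ⟨U, hUS, hU⟩ := h
    refine Set.Countable.mono ?_ (hS U hUS hU)
    intro d hd
    simp only [Set.mem_setOf_eq] at *
    exact fun hdU => hd ⟨U, hUS, hdU⟩

end

section Aux

open Complex Real Topology Pointwise Set

/-- A subgroup of the circle contained in the right half plane is trivial. -/
lemma circle_re_pos_subgroup (S : Subgroup Circle) (hS : ∀ z ∈ S, 0 < (z : ℂ).re) :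
    ∀ z ∈ S, z = 1 := by
  have key : ∀ z ∈ S, 0 < Complex.arg z → False := by
    intro z hz hpos
    set θ := Complex.arg (z : ℂ) with hθ
    have hre : (z : ℂ).re = Real.cos θ := by
      conv_lhs => rw [← Circle.exp_arg z]
      rw [Circle.coe_exp, Complex.exp_ofReal_mul_I_re]
    have hlt : θ < π / 2 := by
      by_contra hge
      push_neg at hge
      have : Real.cos θ ≤ 0 :=
        Real.cos_nonpos_of_pi_div_two_le_of_le hge
          (le_trans (Complex.arg_le_pi _) (by linarith [Real.pi_pos]))
      have := hS z hz
      rw [hre] at this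
      linarith
    have hpow : ∀ n : ℕ, ((z ^ n : Circle) : ℂ).re = Real.cos (n * θ) := by
      intro n
      have : (z ^ n : Circle) = Circle.exp (n * θ) := by
        have h1 : z = Circle.exp θ := (Circle.exp_arg z).symm
        rw [h1]
        have h2 : Circle.exp θ ^ n = Additive.toMul (n • Circle.expHom θ) := rfl
        rw [h2, ← map_nsmul Circle.expHom n θ]
        norm_num [nsmul_eq_mul]
      rw [this, Circle.coe_exp, Complex.exp_ofReal_mul_I_re]
    set n : ℕ := ⌈(π / 2) / θ⌉₊ with hn
    have hx : (0:ℝ) ≤ (π/2)/θ := by positivity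
    have h1 : π / 2 ≤ n * θ := by
      rw [← div_le_iff₀ hpos]
      exact_mod_cast Nat.le_ceil _
    have h2 : (n : ℝ) * θ < π := by
      have h3 := Nat.ceil_lt_add_one hx
      have h4 : (n : ℝ) < (π/2)/θ + 1 := by exact_mod_cast h3
      have hxθ : (π/2)/θ * θ = π/2 := div_mul_cancel₀ _ (ne_of_gt hpos)
      nlinarith
    have hcos : Real.cos (n * θ) ≤ 0 :=
      Real.cos_nonpos_of_pi_div_two_le_of_le h1 (by linarith [Real.pi_pos])
    have := hS (z ^ n) (pow_mem hz n)
    rw [hpow n] at this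
    linarith
  intro z hz
  by_contra hne
  have harg : Complex.arg (z : ℂ) ≠ 0 := by
    intro h0
    apply hne
    have := Circle.exp_arg z
    rw [h0, Circle.exp_zero] at this
    exact this.symm
  rcases lt_or_gt_of_ne harg with hneg | hpos
  · apply key z⁻¹ (inv_mem hz)
    have hco : ((z⁻¹ : Circle) : ℂ) = (z : ℂ)⁻¹ := rfl
    rw [hco, Complex.arg_inv]
    have hpi : Complex.arg (z:ℂ) ≠ π := by
      intro hpi; rw [hpi] at hneg; linarith [Real.pi_pos]
    rw [if_neg hpi]
    linarith
  · exact key z hz hpos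

noncomputable instance : DivisibleBy (Additive Circle) ℤ where
  div a n := if n = 0 then 0 else Circle.expHom (Complex.arg ((Additive.toMul a : Circle) : ℂ) / n)
  div_zero a := by simp
  div_cancel := by
    intro n a hn
    simp only [if_neg hn]
    rw [← map_zsmul Circle.expHom n _]
    have hcast : (n : ℝ) ≠ 0 := Int.cast_ne_zero.2 hn
    rw [zsmul_eq_mul, mul_div_cancel₀ _ hcast]
    show Additive.ofMul (Circle.exp _) = a
    rw [Circle.exp_arg]
    rfl

/-- Characters of a subgroup of an abelian group extend to the whole group. -/
lemma char_extend {A : Type*} [CommGroup A] (B : Subgroup A) (f : B →* Circle) :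
    ∃ g : A →* Circle, ∀ b : B, g (b : A) = f b := by
  have hinj : Function.Injective (MonoidHom.toAdditive B.subtype) := by
    intro a b hab
    exact Subtype.ext (congrArg Additive.toMul hab)
  obtain ⟨h, hh⟩ := (Module.Baer.of_divisible (Additive Circle)).extension_property_addMonoidHom
    (MonoidHom.toAdditive B.subtype) hinj (MonoidHom.toAdditive f)
  refine ⟨MonoidHom.toAdditive.symm h, fun b => ?_⟩
  have := DFunLike.congr_fun hh (Additive.ofMul b)
  exact congrArg Additive.toMul this

/-- Reflexive protodiscrete groups: compact subsets of the dual are annihilated by an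
open subgroup. -/
lemma exists_open_subgroup_of_compact_dual {A : Type*} [CommGroup A] [TopologicalSpace A]
    [IsTopologicalGroup A] (hr : PontryaginReflexive A) (hp : Protodiscrete A)
    (C : Set (PontryaginDual A)) (hC : IsCompact C) :
    ∃ V : Subgroup A, IsOpen (V : Set A) ∧ ∀ χ ∈ C, ∀ v ∈ V, χ v = 1 := by
  set W : Set Circle := {z : Circle | 0 < (z : ℂ).re} with hW
  have hWopen : IsOpen W := by
    have hc : Continuous fun z : Circle => (z : ℂ).re :=
      Complex.continuous_re.comp continuous_subtype_val
    exact isOpen_lt continuous_const hc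
  have hP'open : IsOpen {ξ : PontryaginDual (PontryaginDual A) | Set.MapsTo ξ C W} := by
    have h := ContinuousMap.isOpen_setOf_mapsTo (X := PontryaginDual A) (Y := Circle) hC hWopen
    exact h.preimage (ContinuousMonoidHom.isInducing_toContinuousMap _ _).continuous
  have hcont : Continuous (pontryaginEval A) := hr.continuous
  have hPopen : IsOpen ((pontryaginEval A) ⁻¹' {ξ | Set.MapsTo ξ C W}) :=
    hP'open.preimage hcont
  have hmem1 : (1 : A) ∈ (pontryaginEval A) ⁻¹' {ξ | Set.MapsTo ξ C W} := by
    intro χ _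
    show (0:ℝ) < ((χ (1:A) : Circle) : ℂ).re
    rw [map_one χ]
    norm_num
  obtain ⟨V, hVopen, hVsub⟩ := hp _ (hPopen.mem_nhds hmem1)
  refine ⟨V, hVopen, fun χ hχ v hv => ?_⟩
  have himg : ∀ z ∈ Subgroup.map χ.toMonoidHom V, 0 < (z : ℂ).re := by
    rintro z ⟨w, hw, rfl⟩
    exact hVsub hw hχ
  exact circle_re_pos_subgroup _ himg (χ v) ⟨v, hv, rfl⟩

end Aux


section Aux2

open Topology Pointwise Set

/-- If all compact subsets of `Z` are finite, the compact-open topology on `C(Z, Circle)`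
is induced by the product topology. -/
lemma isInducing_coeFn_of_compacts_finite {Z : Type*} [TopologicalSpace Z]
    (hZ : ∀ K : Set Z, IsCompact K → K.Finite) :
    Topology.IsInducing (fun f : C(Z, Circle) => (f : Z → Circle)) := by
  constructor
  refine le_antisymm ?_ ?_
  · exact continuous_iff_le_induced.1
      (continuous_pi fun z => continuous_eval_const z)
  · rw [ContinuousMap.compactOpen_eq]
    refine le_generateFrom ?_
    rintro s ⟨Kc, hKc, O, hO, rfl⟩
    refine ⟨{g : Z → Circle | ∀ x ∈ Kc, g x ∈ O}, ?_, rfl⟩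
    have heq : {g : Z → Circle | ∀ x ∈ Kc, g x ∈ O} =
        ⋂ x ∈ Kc, (fun g : Z → Circle => g x) ⁻¹' O := by
      ext g; simp
    rw [heq]
    exact (hZ Kc hKc).isOpen_biInter fun x _ => (show IsOpen O from hO).preimage (continuous_apply x)

variable {G : Type*} [CommGroup G] [TopologicalSpace G] [IsTopologicalGroup G] (H : Subgroup G)

/-- A homomorphism on the quotient agreeing with a continuous character on an open set
around the identity is continuous. -/
lemma continuous_of_agree (N : Set G) (hNopen : IsOpen N) (h1N : (1:G) ∈ N)
    (χ : PontryaginDual G) (ψ : (G ⧸ H) →* Circle)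
    (hagree : ∀ x ∈ N, ψ (QuotientGroup.mk x) = χ x) : Continuous ψ := by
  refine continuous_of_continuousAt_one (M := Circle) (hom := (G ⧸ H) →* Circle) (G := G ⧸ H) ψ ?_
  rw [ContinuousAt, map_one, Filter.tendsto_def]
  intro s hs
  have hχ : χ ⁻¹' s ∈ 𝓝 (1 : G) := by
    have h := (map_continuous χ).continuousAt (x := (1:G))
    rw [ContinuousAt, map_one, Filter.tendsto_def] at h
    exact h s hs
  obtain ⟨O₂, hO₂sub, hO₂open, h1O₂⟩ := mem_nhds_iff.1 hχ
  refine mem_nhds_iff.2 ⟨QuotientGroup.mk '' (O₂ ∩ N), ?_, ?_, ⟨1, ⟨h1O₂, h1N⟩, rfl⟩⟩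
  · rintro y ⟨x, ⟨hxO, hxN⟩, rfl⟩
    show ψ _ ∈ s
    rw [hagree x hxN]
    exact hO₂sub hxO
  · exact QuotientGroup.isOpenMap_coe (N := H) _ (hO₂open.inter hNopen)

end Aux2


open Topology in
/-- if `H` is a closed subgroup of a Hausdorff abelian group `G` such that
`H` and `G/H` are reflexive, protodiscrete, and have no infinite compact subsets, then
every compact subset of `G^∧` is contained in the annihilator of some open subgroup of
`G`. -/
theorem statement19 (G : Type*) [CommGroup G] [TopologicalSpace G] [IsTopologicalGroup G]
    [T2Space G] (H : Subgroup G) (hH : IsClosed (H : Set G))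
    (h1 : PontryaginReflexive H) (h2 : Protodiscrete H)
    (h3 : ∀ K : Set H, IsCompact K → K.Finite)
    (h4 : PontryaginReflexive (G ⧸ H)) (h5 : Protodiscrete (G ⧸ H))
    (h6 : ∀ K : Set (G ⧸ H), IsCompact K → K.Finite)
    (K : Set (PontryaginDual G)) (hK : IsCompact K) :
    ∃ N : Subgroup G, IsOpen (N : Set G) ∧
      K ⊆ (annihilator (N : Set G) : Subgroup (PontryaginDual G)) := by
  classical
  -- Phase 1: find an open subgroup V of H annihilated by all of K
  have hρcont : Continuous (PontryaginDual.map (⟨H.subtype, continuous_subtype_val⟩ :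
      ContinuousMonoidHom H G)) := map_continuous _
  obtain ⟨V, hVopen, hV1⟩ :=
    exists_open_subgroup_of_compact_dual h1 h2
      ((PontryaginDual.map (⟨H.subtype, continuous_subtype_val⟩ : ContinuousMonoidHom H G)) '' K)
      (hK.image hρcont)
  set V' : Subgroup G := V.map H.subtype with hV'def
  have hχV' : ∀ χ ∈ K, ∀ x ∈ V', χ x = 1 := by
    rintro χ hχ x ⟨v, hv, rfl⟩
    exact hV1 _ ⟨χ, hχ, rfl⟩ v hv
  -- the open set O of G cutting out V
  obtain ⟨O, hOopen, hOV⟩ := isOpen_induced_iff.1 hVopen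
  have hOH : ∀ x : G, x ∈ O → x ∈ H → x ∈ V' := by
    intro x hxO hxH
    exact ⟨⟨x, hxH⟩, by rw [← hOV]; exact hxO, rfl⟩
  have h1O : (1:G) ∈ O := by
    have h : (1:H) ∈ (V : Set H) := V.one_mem
    rw [← hOV] at h
    simpa using h
  -- symmetric open U with triple products in O
  obtain ⟨U₁, hU₁open, h1U₁, hU₁⟩ := exists_open_nhds_one_mul_subset (hOopen.mem_nhds h1O)
  obtain ⟨U₂, hU₂open, h1U₂, hU₂⟩ := exists_open_nhds_one_mul_subset (hU₁open.mem_nhds h1U₁)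
  set U : Set G := U₂ ∩ U₂⁻¹ with hUdef
  have hUopen : IsOpen U := hU₂open.inter hU₂open.inv
  have h1U : (1:G) ∈ U := ⟨h1U₂, by simpa using h1U₂⟩
  have hUinv : ∀ x ∈ U, x⁻¹ ∈ U := by
    rintro x ⟨hx1, hx2⟩
    exact ⟨hx2, by simpa using hx1⟩
  have hUU : ∀ a ∈ U, ∀ b ∈ U, ∀ c ∈ U, a * b * c ∈ O := by
    intro a ha b hb c hc
    have h1 : a * b ∈ U₁ := hU₂ (Set.mul_mem_mul ha.1 hb.1)
    have h2 : c ∈ U₁ := by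
      have := hU₂ (Set.mul_mem_mul hc.1 h1U₂)
      simpa using this
    exact hU₁ (Set.mul_mem_mul h1 h2)
  -- quotient map
  have hqopen : IsOpenMap (QuotientGroup.mk : G → G ⧸ H) := QuotientGroup.isOpenMap_coe
  have hqcont : Continuous (QuotientGroup.mk : G → G ⧸ H) := QuotientGroup.continuous_mk
  have hqU : (QuotientGroup.mk '' U) ∈ 𝓝 (1 : G ⧸ H) :=
    (hqopen U hUopen).mem_nhds ⟨1, h1U, rfl⟩
  obtain ⟨Wb, hWbopen, hWbsub⟩ := h5 _ hqU
  -- the key absorption property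
  have key : ∀ u₁ u₂ v : G, u₁ ∈ U → u₂ ∈ U → v ∈ (V' : Set G) →
      (QuotientGroup.mk (u₁ * u₂ * v) : G ⧸ H) ∈ Wb → u₁ * u₂ * v ∈ U * (V' : Set G) := by
    intro u₁ u₂ v hu₁ hu₂ hv hmk
    obtain ⟨w, hwU, hw⟩ := hWbsub hmk
    have hH' : w⁻¹ * (u₁ * u₂ * v) ∈ H := QuotientGroup.eq.1 hw
    have hvH : v ∈ H := by
      obtain ⟨hh, _, rfl⟩ := hv
      exact hh.2
    have hwu : w⁻¹ * u₁ * u₂ ∈ V' := by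
      apply hOH
      · exact hUU _ (hUinv w hwU) _ hu₁ _ hu₂
      · have heq : w⁻¹ * u₁ * u₂ = w⁻¹ * (u₁ * u₂ * v) * v⁻¹ := by group
        rw [heq]
        exact H.mul_mem hH' (H.inv_mem hvH)
    have heq2 : u₁ * u₂ * v = w * (w⁻¹ * u₁ * u₂ * v) := by group
    rw [heq2]
    exact Set.mul_mem_mul hwU (V'.mul_mem hwu hv)
  -- the subgroup N
  set N : Subgroup G :=
    { carrier := (QuotientGroup.mk ⁻¹' (Wb : Set (G ⧸ H))) ∩ (U * (V' : Set G))
      one_mem' := ⟨by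
        show (QuotientGroup.mk (1:G) : G ⧸ H) ∈ Wb
        simpa using Wb.one_mem, ⟨1, h1U, 1, V'.one_mem, by simp⟩⟩
      mul_mem' := by
        rintro x y ⟨hxW, hxUV⟩ ⟨hyW, hyUV⟩
        obtain ⟨u₁, hu₁, v₁, hv₁, rfl⟩ := hxUV
        obtain ⟨u₂, hu₂, v₂, hv₂, rfl⟩ := hyUV
        have heq : u₁ * v₁ * (u₂ * v₂) = u₁ * u₂ * (v₁ * v₂) := mul_mul_mul_comm u₁ v₁ u₂ v₂
        have hmkW : (QuotientGroup.mk (u₁ * u₂ * (v₁ * v₂)) : G ⧸ H) ∈ Wb := by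
          rw [← heq]
          show (QuotientGroup.mk (u₁ * v₁ * (u₂ * v₂)) : G ⧸ H) ∈ Wb
          rw [QuotientGroup.mk_mul]
          exact Wb.mul_mem hxW hyW
        constructor
        · show (QuotientGroup.mk (u₁ * v₁ * (u₂ * v₂)) : G ⧸ H) ∈ Wb
          rw [heq]
          exact hmkW
        · show u₁ * v₁ * (u₂ * v₂) ∈ U * (V' : Set G)
          rw [heq]
          exact key u₁ u₂ (v₁ * v₂) hu₁ hu₂ (V'.mul_mem hv₁ hv₂) hmkW
      inv_mem' := by
        rintro x ⟨hxW, hxUV⟩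
        obtain ⟨u, hu, v, hv, rfl⟩ := hxUV
        have heq : (u * v)⁻¹ = u⁻¹ * 1 * v⁻¹ := by rw [mul_inv, mul_one]
        have hmkW : (QuotientGroup.mk (u⁻¹ * 1 * v⁻¹) : G ⧸ H) ∈ Wb := by
          rw [← heq]
          show (QuotientGroup.mk ((u*v)⁻¹) : G ⧸ H) ∈ Wb
          rw [QuotientGroup.mk_inv]
          exact Wb.inv_mem hxW
        constructor
        · show (QuotientGroup.mk ((u*v)⁻¹) : G ⧸ H) ∈ Wb
          rw [heq]
          exact hmkW
        · show (u * v)⁻¹ ∈ U * (V' : Set G)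
          rw [heq]
          exact key u⁻¹ 1 v⁻¹ (hUinv u hu) h1U (V'.inv_mem hv) hmkW } with hNdef
  have hNopen : IsOpen (N : Set G) :=
    (hWbopen.preimage hqcont).inter (hUopen.mul_right)
  have h1N : (1:G) ∈ (N : Set G) := N.one_mem
  -- N ∩ H ⊆ V'
  have hNH : ∀ x : G, x ∈ N → x ∈ H → x ∈ V' := by
    intro x hxN hxH
    obtain ⟨-, hxUV⟩ := hxN
    obtain ⟨u, hu, v, hv, rfl⟩ := hxUV
    have hvH : v ∈ H := by
      obtain ⟨hh, _, rfl⟩ := hv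
      exact hh.2
    have huH : u ∈ H := by
      have : u = u * v * v⁻¹ := by group
      rw [this]
      exact H.mul_mem hxH (H.inv_mem hvH)
    have huV' : u ∈ V' := by
      apply hOH
      · have : u = u * 1 * 1 := by group
        rw [this]
        exact hUU _ hu _ h1U _ h1U
      · exact huH
    exact V'.mul_mem huV' hv
  -- characters in K are constant on fibers of mk over N
  have hker : ∀ χ ∈ K, ∀ x ∈ N, ∀ y ∈ N,
      (QuotientGroup.mk x : G ⧸ H) = QuotientGroup.mk y → χ x = χ y := by
    intro χ hχ x hxN y hyN hxy
    have hxyH : x⁻¹ * y ∈ H := QuotientGroup.eq.1 hxy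
    have hxyN : x⁻¹ * y ∈ N := N.mul_mem (N.inv_mem hxN) hyN
    have h1 : χ (x⁻¹ * y) = 1 := hχV' χ hχ _ (hNH _ hxyN hxyH)
    have h2 : χ (x⁻¹ * y) = (χ x)⁻¹ * χ y := by
      rw [map_mul, map_inv]
    rw [h2] at h1
    exact inv_mul_eq_one.1 h1
  -- Phase 3: extension of characters to the quotient
  have hext : ∀ χ ∈ K, ∃ ψ : (G ⧸ H) →* Circle,
      ∀ x ∈ N, ψ (QuotientGroup.mk x) = χ x := by
    intro χ hχ
    have hch : ∀ y : N.map (QuotientGroup.mk' H),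
        ∃ x, x ∈ N ∧ (QuotientGroup.mk x : G ⧸ H) = (y : G ⧸ H) := by
      rintro ⟨y, x, hxN, rfl⟩
      exact ⟨x, hxN, rfl⟩
    choose sec hsecN hsecq using hch
    have hval : ∀ (y : N.map (QuotientGroup.mk' H)) (x : G), x ∈ N →
        (QuotientGroup.mk x : G ⧸ H) = (y : G ⧸ H) → χ (sec y) = χ x := by
      intro y x hxN hxq
      exact hker χ hχ (sec y) (hsecN y) x hxN (by rw [hsecq y, hxq])
    have hmul : ∀ a b : N.map (QuotientGroup.mk' H),
        χ (sec (a * b)) = χ (sec a) * χ (sec b) := by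
      intro a b
      have hq : (QuotientGroup.mk (sec a * sec b) : G ⧸ H) = ((a * b : _) : G ⧸ H) := by
        rw [QuotientGroup.mk_mul, hsecq a, hsecq b]
        rfl
      rw [hval (a * b) (sec a * sec b) (N.mul_mem (hsecN a) (hsecN b)) hq, map_mul]
    obtain ⟨ψ, hψ⟩ := char_extend (N.map (QuotientGroup.mk' H))
      (MonoidHom.mk' (fun y => χ (sec y)) hmul)
    refine ⟨ψ, fun x hxN => ?_⟩
    have hxQ : (QuotientGroup.mk x : G ⧸ H) ∈ N.map (QuotientGroup.mk' H) := ⟨x, hxN, rfl⟩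
    have h := hψ ⟨QuotientGroup.mk x, hxQ⟩
    rw [h]
    exact hval ⟨_, hxQ⟩ x hxN rfl
  -- Phase 4: compactness of the set of extensions
  have hind : Topology.IsInducing (fun ξ : PontryaginDual (G ⧸ H) => (ξ : (G ⧸ H) → Circle)) :=
    (isInducing_coeFn_of_compacts_finite h6).comp
      (ContinuousMonoidHom.isInducing_toContinuousMap _ _)
  set Acal : Set (PontryaginDual G × ((G ⧸ H) → Circle)) :=
    {p | p.1 ∈ K ∧ (∀ a b : G ⧸ H, p.2 (a * b) = p.2 a * p.2 b) ∧
      ∀ x ∈ N, p.2 (QuotientGroup.mk x) = p.1 x} with hAdef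
  have hC1closed : IsClosed {p : PontryaginDual G × ((G ⧸ H) → Circle) |
      ∀ a b : G ⧸ H, p.2 (a * b) = p.2 a * p.2 b} := by
    have heq : {p : PontryaginDual G × ((G ⧸ H) → Circle) |
        ∀ a b : G ⧸ H, p.2 (a * b) = p.2 a * p.2 b} =
        ⋂ (a : G ⧸ H), ⋂ (b : G ⧸ H), {p | p.2 (a * b) = p.2 a * p.2 b} := by
      ext p; simp
    rw [heq]
    refine isClosed_iInter fun a => isClosed_iInter fun b => isClosed_eq ?_ ?_
    · exact (continuous_apply (a * b)).comp continuous_snd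
    · exact (((continuous_apply a).comp continuous_snd).mul
        ((continuous_apply b).comp continuous_snd))
  have hC2closed : IsClosed {p : PontryaginDual G × ((G ⧸ H) → Circle) |
      ∀ x ∈ N, p.2 (QuotientGroup.mk x) = p.1 x} := by
    have heq : {p : PontryaginDual G × ((G ⧸ H) → Circle) |
        ∀ x ∈ N, p.2 (QuotientGroup.mk x) = p.1 x} =
        ⋂ (x : G), ⋂ (_ : x ∈ N), {p : PontryaginDual G × ((G ⧸ H) → Circle) |
          p.2 (QuotientGroup.mk x) = p.1 x} := by
      ext p; simp
    rw [heq]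
    refine isClosed_iInter fun x => isClosed_iInter fun _ => isClosed_eq ?_ ?_
    · exact (continuous_apply (QuotientGroup.mk x : G ⧸ H)).comp continuous_snd
    · exact ((continuous_eval_const (F := ContinuousMonoidHom G Circle) x :)).comp continuous_fst
  have hAcal : IsCompact Acal := by
    have heq : Acal = (K ×ˢ (Set.univ : Set ((G ⧸ H) → Circle))) ∩
        ({p : PontryaginDual G × ((G ⧸ H) → Circle) |
          ∀ a b : G ⧸ H, p.2 (a * b) = p.2 a * p.2 b} ∩
         {p : PontryaginDual G × ((G ⧸ H) → Circle) |
          ∀ x ∈ N, p.2 (QuotientGroup.mk x) = p.1 x}) := by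
      ext p
      simp only [hAdef, Set.mem_inter_iff, Set.mem_setOf_eq, Set.mem_prod, Set.mem_univ,
        and_true]
    rw [heq]
    exact (hK.prod isCompact_univ).inter_right (hC1closed.inter hC2closed)
  have hK2'comp : IsCompact (Prod.snd '' Acal) := hAcal.image continuous_snd
  set K₂ : Set (PontryaginDual (G ⧸ H)) :=
    (fun ξ : PontryaginDual (G ⧸ H) => (ξ : (G ⧸ H) → Circle)) ⁻¹' (Prod.snd '' Acal) with hK₂def
  have himg : (fun ξ : PontryaginDual (G ⧸ H) => (ξ : (G ⧸ H) → Circle)) '' K₂ =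
      Prod.snd '' Acal := by
    apply Set.image_preimage_eq_of_subset
    rintro ψ ⟨⟨χ, ψ'⟩, ⟨hχK, hhom, hagr⟩, rfl⟩
    have hcont : Continuous (MonoidHom.mk' ψ' hhom : (G ⧸ H) →* Circle) :=
      continuous_of_agree H (N : Set G) hNopen h1N χ (MonoidHom.mk' ψ' hhom)
        (fun x hx => hagr x hx)
    exact ⟨⟨MonoidHom.mk' ψ' hhom, hcont⟩, rfl⟩
  have hK₂comp : IsCompact K₂ := by
    rw [hind.isCompact_iff]
    rw [himg]
    exact hK2'comp
  -- apply reflexivity of the quotient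
  obtain ⟨Vb, hVbopen, hVb1⟩ := exists_open_subgroup_of_compact_dual h4 h5 K₂ hK₂comp
  refine ⟨N ⊓ Vb.comap (QuotientGroup.mk' H), ?_, ?_⟩
  · exact hNopen.inter (hVbopen.preimage hqcont)
  · intro χ hχ
    obtain ⟨ψ, hψ⟩ := hext χ hχ
    have hcont : Continuous ψ := continuous_of_agree H (N : Set G) hNopen h1N χ ψ hψ
    have hξmem : (⟨ψ, hcont⟩ : PontryaginDual (G ⧸ H)) ∈ K₂ := by
      refine ⟨(χ, ⇑ψ), ⟨hχ, fun a b => map_mul ψ a b, fun x hx => hψ x hx⟩, rfl⟩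
    show ∀ x ∈ ((N ⊓ Vb.comap (QuotientGroup.mk' H) : Subgroup G) : Set G), χ x = 1
    rintro x ⟨hxN, hxV⟩
    have h1 : χ x = ψ (QuotientGroup.mk x) := (hψ x hxN).symm
    rw [h1]
    exact hVb1 _ hξmem _ hxV
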